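/- Let n ≥ 1 and x, y ∈ ℝ^n. Then R_n(y; x) ≤ ‖y‖ − ‖x‖, where R_n(y; x) = Σ_{1≤i<j≤n} |x_i − x_j| + Σ_{1≤i<j≤n} |y_i − y_j| − Σ_{i=1}^{n} Σ_{j=1}^{n} |x_i − y_j| and ‖x‖ = |x_1| + … + |x_n|. -/

import Mathlib

open Finset MeasureTheory

noncomputable def hh (a s : ℝ) : ℝ :=
  if 0 ≤ s ∧ s < a then 1 else if a ≤ s ∧ s < 0 then -1 else 0

lemma hh_of_nonneg {s : ℝ} (a : ℝ) (hs : 0 ≤ s) : hh a s = if s < a then 1 else 0 := by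
  unfold hh
  rcases lt_or_ge s a with h | h <;> simp [h, hs, not_lt.2 hs]

lemma hh_of_neg {s : ℝ} (a : ℝ) (hs : s < 0) : hh a s = if a ≤ s then -1 else 0 := by
  unfold hh
  rcases le_or_gt a s with h | h
  · simp [h, hs, not_le.2 hs]
  · simp [hs, not_le.2 hs, not_le.2 h, not_lt.2 h.le]

lemma hh_zero (s : ℝ) : hh 0 s = 0 := by
  rcases le_or_gt 0 s with hs | hs
  · rw [hh_of_nonneg 0 hs, if_neg (not_lt.2 hs)]
  · rw [hh_of_neg 0 hs, if_neg (not_le.2 hs)]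

lemma hh_abs_sub (a b s : ℝ) :
    |hh a s - hh b s| = Set.indicator (Set.Ico (min a b) (max a b)) (1 : ℝ → ℝ) s := by
  rcases le_or_gt 0 s with hs | hs
  · simp only [hh_of_nonneg a hs, hh_of_nonneg b hs]
    rcases le_total a b with hab | hab <;>
      rcases lt_or_ge s a with h1 | h1 <;> rcases lt_or_ge s b with h2 | h2 <;>
      simp_all [Set.indicator_apply, Set.mem_Ico, min_eq_left, min_eq_right,
        max_eq_right, max_eq_left, not_lt.2, le_of_lt, not_le.2] <;>
      first | linarith | norm_num
  · simp only [hh_of_neg a hs, hh_of_neg b hs]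
    rcases le_total a b with hab | hab <;>
      rcases le_or_gt a s with h1 | h1 <;> rcases le_or_gt b s with h2 | h2 <;>
      simp_all [Set.indicator_apply, Set.mem_Ico, min_eq_left, min_eq_right,
        max_eq_right, max_eq_left, not_lt.2, le_of_lt, not_le.2] <;>
      first | linarith | norm_num

lemma integrable_k (a b : ℝ) : Integrable (fun s => |hh a s - hh b s|) := by
  simp only [hh_abs_sub]
  rw [integrable_indicator_iff measurableSet_Ico]
  apply integrableOn_const (by rw [Real.volume_Ico]; exact ENNReal.ofReal_ne_top) (by simp)

lemma integral_k (a b : ℝ) : (∫ s, |hh a s - hh b s|) = |a - b| := by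
  simp only [hh_abs_sub]
  rw [MeasureTheory.integral_indicator_one measurableSet_Ico, measureReal_def, Real.volume_Ico,
    ENNReal.toReal_ofReal (by rcases le_total a b with h | h <;>
      simp [min_eq_left, min_eq_right, max_eq_left, max_eq_right, h])]
  rcases le_total a b with h | h
  · rw [min_eq_left h, max_eq_right h, abs_of_nonpos (by linarith)]; ring
  · rw [min_eq_right h, max_eq_left h, abs_of_nonneg (by linarith)]

lemma sum_ite_lt {n : ℕ} (g : Fin n → Fin n → ℝ) (hsymm : ∀ i j, g i j = g j i)
    (hdiag : ∀ i, g i i = 0) :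
    (∑ i : Fin n, ∑ j : Fin n, if i < j then g i j else 0)
      = (∑ i : Fin n, ∑ j : Fin n, g i j) / 2 := by
  have h1 : (∑ i : Fin n, ∑ j : Fin n, g i j)
      = (∑ i : Fin n, ∑ j : Fin n, if i < j then g i j else 0)
        + ∑ i : Fin n, ∑ j : Fin n, if j < i then g i j else 0 := by
    rw [← Finset.sum_add_distrib]
    refine Finset.sum_congr rfl fun i _ => ?_
    rw [← Finset.sum_add_distrib]
    refine Finset.sum_congr rfl fun j _ => ?_
    rcases lt_trichotomy i j with h | h | h
    · simp [h, not_lt.2 h.le]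
    · simp [h, hdiag]
    · simp [h, not_lt.2 h.le]
  have h2 : (∑ i : Fin n, ∑ j : Fin n, if j < i then g i j else 0)
      = ∑ i : Fin n, ∑ j : Fin n, if i < j then g i j else 0 := by
    rw [Finset.sum_comm]
    exact Finset.sum_congr rfl fun i _ => Finset.sum_congr rfl fun j _ => by
      rcases lt_or_ge i j with h | h <;> simp [h, not_lt.2, hsymm i j]
  rw [h2] at h1
  linarith

lemma key01 {n : ℕ} (a b : Fin n → ℝ) (ha : ∀ i, a i = 0 ∨ a i = 1)
    (hb : ∀ j, b j = 0 ∨ b j = 1) :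
    (∑ i : Fin n, ∑ j : Fin n, if i < j then |a i - a j| else 0)
      + (∑ i : Fin n, ∑ j : Fin n, if i < j then |b i - b j| else 0)
      - (∑ i : Fin n, ∑ j : Fin n, |a i - b j|)
      + (∑ i : Fin n, a i) - (∑ j : Fin n, b j) ≤ 0 := by
  have habs : ∀ u v : ℝ, (u = 0 ∨ u = 1) → (v = 0 ∨ v = 1) → |u - v| = u + v - 2*(u*v) := by
    rintro u v (rfl | rfl) (rfl | rfl) <;> norm_num
  set S := ∑ i : Fin n, a i with hS
  set T := ∑ j : Fin n, b j with hT
  have hda : (∑ i : Fin n, ∑ j : Fin n, |a i - a j|) = (n:ℝ)*S + (n:ℝ)*S - 2*(S*S) := by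
    have : ∀ i j : Fin n, |a i - a j| = a i + a j - 2*(a i * a j) :=
      fun i j => habs _ _ (ha i) (ha j)
    simp only [this, Finset.sum_sub_distrib, Finset.sum_add_distrib, Finset.sum_const,
      Finset.card_univ, Fintype.card_fin, nsmul_eq_mul, ← Finset.mul_sum, ← hS, ← Finset.sum_mul]
    try ring
  have hdb : (∑ i : Fin n, ∑ j : Fin n, |b i - b j|) = (n:ℝ)*T + (n:ℝ)*T - 2*(T*T) := by
    have : ∀ i j : Fin n, |b i - b j| = b i + b j - 2*(b i * b j) :=
      fun i j => habs _ _ (hb i) (hb j)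
    simp only [this, Finset.sum_sub_distrib, Finset.sum_add_distrib, Finset.sum_const,
      Finset.card_univ, Fintype.card_fin, nsmul_eq_mul, ← Finset.mul_sum, ← hT, ← Finset.sum_mul]
    try ring
  have hcross : (∑ i : Fin n, ∑ j : Fin n, |a i - b j|) = (n:ℝ)*S + (n:ℝ)*T - 2*(S*T) := by
    have : ∀ i j : Fin n, |a i - b j| = a i + b j - 2*(a i * b j) :=
      fun i j => habs _ _ (ha i) (hb j)
    simp only [this, Finset.sum_sub_distrib, Finset.sum_add_distrib, Finset.sum_const,
      Finset.card_univ, Fintype.card_fin, nsmul_eq_mul, ← Finset.mul_sum, ← hT, ← hS,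
      ← Finset.sum_mul]
    try ring
  have e1 : (∑ i : Fin n, ∑ j : Fin n, if i < j then |a i - a j| else 0)
      = ((n:ℝ)*S + (n:ℝ)*S - 2*(S*S)) / 2 := by
    rw [sum_ite_lt _ (fun i j => abs_sub_comm _ _) (fun i => by simp), hda]
  have e2 : (∑ i : Fin n, ∑ j : Fin n, if i < j then |b i - b j| else 0)
      = ((n:ℝ)*T + (n:ℝ)*T - 2*(T*T)) / 2 := by
    rw [sum_ite_lt _ (fun i j => abs_sub_comm _ _) (fun i => by simp), hdb]
  rw [e1, e2, hcross]
  obtain ⟨A, hA⟩ : ∃ A : ℕ, S = A := by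
    refine ⟨(univ.filter fun i => a i = 1).card, ?_⟩
    rw [hS]
    rw [show (∑ i : Fin n, a i) = ∑ i : Fin n, if a i = 1 then (1:ℝ) else 0 from
      Finset.sum_congr rfl fun i _ => by rcases ha i with h | h <;> simp [h]]
    rw [Finset.sum_boole]
  obtain ⟨B, hB⟩ : ∃ B : ℕ, T = B := by
    refine ⟨(univ.filter fun j => b j = 1).card, ?_⟩
    rw [hT]
    rw [show (∑ j : Fin n, b j) = ∑ j : Fin n, if b j = 1 then (1:ℝ) else 0 from
      Finset.sum_congr rfl fun j _ => by rcases hb j with h | h <;> simp [h]]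
    rw [Finset.sum_boole]
  rw [hA, hB]
  rcases le_or_gt A B with h | h
  · have : (A:ℝ) ≤ B := Nat.cast_le.2 h
    nlinarith
  · have : (B:ℝ) + 1 ≤ A := by exact_mod_cast h
    nlinarith

lemma pointwise_le {n : ℕ} (x y : Fin n → ℝ) (s : ℝ) :
    (∑ i : Fin n, ∑ j : Fin n, if i < j then |hh (x i) s - hh (x j) s| else 0)
      + (∑ i : Fin n, ∑ j : Fin n, if i < j then |hh (y i) s - hh (y j) s| else 0)
      - (∑ i : Fin n, ∑ j : Fin n, |hh (x i) s - hh (y j) s|)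
      + (∑ i : Fin n, |hh (x i) s - hh 0 s|)
      - (∑ j : Fin n, |hh (y j) s - hh 0 s|) ≤ 0 := by
  simp only [hh_zero, sub_zero]
  rcases le_or_gt 0 s with hs | hs
  · have ha : ∀ i, hh (x i) s = 0 ∨ hh (x i) s = 1 := by
      intro i; rw [hh_of_nonneg _ hs]; split_ifs <;> simp
    have hb : ∀ j, hh (y j) s = 0 ∨ hh (y j) s = 1 := by
      intro j; rw [hh_of_nonneg _ hs]; split_ifs <;> simp
    have hax : ∀ i, |hh (x i) s| = hh (x i) s := by
      intro i; rcases ha i with h | h <;> rw [h] <;> norm_num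
    have hay : ∀ j, |hh (y j) s| = hh (y j) s := by
      intro j; rcases hb j with h | h <;> rw [h] <;> norm_num
    simp only [hax, hay]
    exact key01 _ _ ha hb
  · have ha : ∀ i, -hh (x i) s = 0 ∨ -hh (x i) s = 1 := by
      intro i; rw [hh_of_neg _ hs]; split_ifs <;> simp
    have hb : ∀ j, -hh (y j) s = 0 ∨ -hh (y j) s = 1 := by
      intro j; rw [hh_of_neg _ hs]; split_ifs <;> simp
    have key := key01 _ _ ha hb
    have e : ∀ u v : ℝ, |(-u) - (-v)| = |u - v| := by
      intro u v; rw [show (-u) - (-v) = -(u - v) by ring, abs_neg]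
    simp only [e] at key
    have hax : ∀ i, |hh (x i) s| = -hh (x i) s := by
      intro i; rcases ha i with h | h
      · rw [abs_of_nonneg (by linarith)]; linarith
      · rw [abs_of_nonpos (by linarith)]
    have hay : ∀ j, |hh (y j) s| = -hh (y j) s := by
      intro j; rcases hb j with h | h
      · rw [abs_of_nonneg (by linarith)]; linarith
      · rw [abs_of_nonpos (by linarith)]
    simp only [hax, hay]
    simpa using key

theorem R_le_norm_sub (n : ℕ) (hn : 1 ≤ n) (x y : Fin n → ℝ) :
    (∑ i : Fin n, ∑ j : Fin n, if i < j then |x i - x j| else 0)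
      + (∑ i : Fin n, ∑ j : Fin n, if i < j then |y i - y j| else 0)
      - (∑ i : Fin n, ∑ j : Fin n, |x i - y j|)
    ≤ (∑ i : Fin n, |y i|) - ∑ i : Fin n, |x i| := by
  have hint_ite : ∀ (c d : Fin n → ℝ) (i j : Fin n),
      Integrable (fun s => if i < j then |hh (c i) s - hh (d j) s| else 0) := by
    intro c d i j
    by_cases h : i < j
    · simpa [h] using integrable_k (c i) (d j)
    · simpa [h] using (integrable_const (0:ℝ))
  have hint1 : ∀ (c : Fin n → ℝ), Integrable (fun s =>
      ∑ i : Fin n, ∑ j : Fin n, if i < j then |hh (c i) s - hh (c j) s| else 0) := by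
    intro c
    exact integrable_finset_sum _ fun i _ => integrable_finset_sum _ fun j _ => hint_ite c c i j
  have hint3 : Integrable (fun s => ∑ i : Fin n, ∑ j : Fin n, |hh (x i) s - hh (y j) s|) :=
    integrable_finset_sum _ fun i _ => integrable_finset_sum _ fun j _ => integrable_k _ _
  have hint4 : ∀ (c : Fin n → ℝ), Integrable (fun s => ∑ i : Fin n, |hh (c i) s - hh 0 s|) :=
    fun c => integrable_finset_sum _ fun i _ => integrable_k _ _
  have I1 : ∀ (c : Fin n → ℝ),
      (∫ s, ∑ i : Fin n, ∑ j : Fin n, if i < j then |hh (c i) s - hh (c j) s| else 0)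
      = ∑ i : Fin n, ∑ j : Fin n, if i < j then |c i - c j| else 0 := by
    intro c
    rw [MeasureTheory.integral_finset_sum _
      (fun i _ => integrable_finset_sum _ fun j _ => hint_ite c c i j)]
    refine Finset.sum_congr rfl fun i _ => ?_
    rw [MeasureTheory.integral_finset_sum _ (fun j _ => hint_ite c c i j)]
    refine Finset.sum_congr rfl fun j _ => ?_
    by_cases h : i < j
    · simp only [if_pos h]; exact integral_k _ _
    · simp [h]
  have I3 : (∫ s, ∑ i : Fin n, ∑ j : Fin n, |hh (x i) s - hh (y j) s|)
      = ∑ i : Fin n, ∑ j : Fin n, |x i - y j| := by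
    rw [MeasureTheory.integral_finset_sum _
      (fun i _ => integrable_finset_sum _ fun j _ => integrable_k _ _)]
    refine Finset.sum_congr rfl fun i _ => ?_
    rw [MeasureTheory.integral_finset_sum _ (fun j _ => integrable_k _ _)]
    exact Finset.sum_congr rfl fun j _ => integral_k _ _
  have I4 : ∀ (c : Fin n → ℝ),
      (∫ s, ∑ i : Fin n, |hh (c i) s - hh 0 s|) = ∑ i : Fin n, |c i| := by
    intro c
    rw [MeasureTheory.integral_finset_sum _ (fun i _ => integrable_k _ _)]
    refine Finset.sum_congr rfl fun i _ => ?_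
    rw [integral_k]
    simp
  have big : (∫ s,
      ((∑ i : Fin n, ∑ j : Fin n, if i < j then |hh (x i) s - hh (x j) s| else 0)
      + (∑ i : Fin n, ∑ j : Fin n, if i < j then |hh (y i) s - hh (y j) s| else 0)
      - (∑ i : Fin n, ∑ j : Fin n, |hh (x i) s - hh (y j) s|)
      + (∑ i : Fin n, |hh (x i) s - hh 0 s|)
      - (∑ j : Fin n, |hh (y j) s - hh 0 s|))) ≤ 0 :=
    integral_nonpos fun s => pointwise_le x y s
  set A := fun s => ∑ i : Fin n, ∑ j : Fin n, if i < j then |hh (x i) s - hh (x j) s| else 0 with hA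
  set B := fun s => ∑ i : Fin n, ∑ j : Fin n, if i < j then |hh (y i) s - hh (y j) s| else 0 with hB
  set C := fun s => ∑ i : Fin n, ∑ j : Fin n, |hh (x i) s - hh (y j) s| with hC
  set D := fun s => ∑ i : Fin n, |hh (x i) s - hh 0 s| with hD
  set E := fun s => ∑ j : Fin n, |hh (y j) s - hh 0 s| with hE
  have iA : Integrable A := hint1 x
  have iB : Integrable B := hint1 y
  have iC : Integrable C := hint3
  have iD : Integrable D := hint4 x
  have iE : Integrable E := hint4 y
  have big' : (∫ s, (A s + B s - C s + D s - E s)) ≤ 0 := big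
  rw [MeasureTheory.integral_sub (f := fun s => A s + B s - C s + D s) (g := E)
        (by exact ((iA.add iB).sub iC).add iD) iE,
      MeasureTheory.integral_add (f := fun s => A s + B s - C s) (g := D)
        (by exact (iA.add iB).sub iC) iD,
      MeasureTheory.integral_sub (f := fun s => A s + B s) (g := C)
        (by exact iA.add iB) iC,
      MeasureTheory.integral_add (f := A) (g := B) iA iB] at big'
  have eA : (∫ s, A s) = ∑ i : Fin n, ∑ j : Fin n, if i < j then |x i - x j| else 0 := I1 x
  have eB : (∫ s, B s) = ∑ i : Fin n, ∑ j : Fin n, if i < j then |y i - y j| else 0 := I1 y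
  have eC : (∫ s, C s) = ∑ i : Fin n, ∑ j : Fin n, |x i - y j| := I3
  have eD : (∫ s, D s) = ∑ i : Fin n, |x i| := I4 x
  have eE : (∫ s, E s) = ∑ i : Fin n, |y i| := I4 y
  rw [eA, eB, eC, eD, eE] at big'
  linarith
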